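/- Let U, X, Y1, Y2, Û be discrete random variables on finite alphabets whose joint distribution factors as p(u,x) p(y1,y2|x) p(û|y2). If H(Û | Y1) = H(Û | Y2), then I(U; Û | Y1) = 0. -/

import Mathlib

noncomputable def entn {α : Type*} [Fintype α] (q : α → ℝ) : ℝ :=
  - ∑ a, q a * Real.log (q a)

/-- Shannon entropy (base 2). -/
noncomputable def ent {α : Type*} [Fintype α] (q : α → ℝ) : ℝ :=
  - ∑ a, q a * Real.logb 2 (q a)

lemma ent_eq {α : Type*} [Fintype α] (q : α → ℝ) : ent q = entn q / Real.log 2 := by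
  simp only [ent, entn, Real.logb, neg_div, Finset.sum_div, mul_div_assoc]

lemma entn_congr {α β : Type*} [Fintype α] [Fintype β] (e : α ≃ β) (f : α → ℝ) (g : β → ℝ)
    (h : ∀ a, f a = g (e a)) : entn f = entn g := by
  unfold entn
  rw [← Equiv.sum_comp e (fun b => g b * Real.log (g b))]
  exact congrArg Neg.neg (Finset.sum_congr rfl fun a _ => by rw [h])

lemma rot3 {α β γ : Type*} [Fintype α] [Fintype β] [Fintype γ] (f : α → β → γ → ℝ) :
    ∑ a, ∑ b, ∑ c, f a b c = ∑ b, ∑ c, ∑ a, f a b c :=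
  Finset.sum_comm.trans (Finset.sum_congr rfl fun _ _ => Finset.sum_comm)

lemma key_pt (x y z w : ℝ) (hx0 : 0 ≤ x) (hy : x ≤ y) (hz : x ≤ z) (hw : x ≤ w) :
    x * (Real.log y + Real.log z - Real.log x - Real.log w) ≤ y * z / w - x := by
  rcases eq_or_lt_of_le hx0 with h0 | hx
  · rw [← h0]
    simpa using div_nonneg (mul_nonneg (h0 ▸ hy) (h0 ▸ hz)) (h0 ▸ hw)
  · have hy' : 0 < y := lt_of_lt_of_le hx hy
    have hz' : 0 < z := lt_of_lt_of_le hx hz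
    have hw' : 0 < w := lt_of_lt_of_le hx hw
    have hlog : Real.log (y * z / (x * w)) ≤ y * z / (x * w) - 1 :=
      Real.log_le_sub_one_of_pos (by positivity)
    have heq : Real.log y + Real.log z - Real.log x - Real.log w
        = Real.log (y * z / (x * w)) := by
      rw [Real.log_div (by positivity) (by positivity), Real.log_mul hy'.ne' hz'.ne',
        Real.log_mul hx.ne' hw'.ne']
      ring
    rw [heq]
    calc x * Real.log (y * z / (x * w)) ≤ x * (y * z / (x * w) - 1) :=
          mul_le_mul_of_nonneg_left hlog hx0
      _ = y * z / w - x := by field_simp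

lemma cmi_nonneg {A B C : Type*} [Fintype A] [Fintype B] [Fintype C]
    (r : A × B × C → ℝ) (hr : ∀ z, 0 ≤ r z) :
    0 ≤ entn (fun t : A × C => ∑ b, r (t.1, b, t.2))
        + entn (fun t : B × C => ∑ a, r (a, t.1, t.2))
        - entn r - entn (fun c => ∑ a, ∑ b, r (a, b, c)) := by
  have h1 : entn (fun t : A × C => ∑ b, r (t.1, b, t.2))
      = - ∑ a, ∑ b, ∑ c, r (a, b, c) * Real.log (∑ b', r (a, b', c)) := by
    unfold entn
    rw [Fintype.sum_prod_type]
    congr 1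
    refine Finset.sum_congr rfl fun a _ => ?_
    rw [Finset.sum_comm]
    refine Finset.sum_congr rfl fun c _ => ?_
    show (∑ b, r (a, b, c)) * Real.log (∑ b, r (a, b, c)) = _
    exact Finset.sum_mul _ _ _
  have h2 : entn (fun t : B × C => ∑ a, r (a, t.1, t.2))
      = - ∑ a, ∑ b, ∑ c, r (a, b, c) * Real.log (∑ a', r (a', b, c)) := by
    unfold entn
    rw [Fintype.sum_prod_type]
    congr 1
    calc ∑ b, ∑ c, (∑ a, r (a, b, c)) * Real.log (∑ a, r (a, b, c))
        = ∑ b, ∑ c, ∑ a, r (a, b, c) * Real.log (∑ a', r (a', b, c)) :=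
          Finset.sum_congr rfl fun b _ => Finset.sum_congr rfl fun c _ =>
            Finset.sum_mul _ _ _
      _ = ∑ b, ∑ a, ∑ c, r (a, b, c) * Real.log (∑ a', r (a', b, c)) :=
          Finset.sum_congr rfl fun b _ => Finset.sum_comm
      _ = ∑ a, ∑ b, ∑ c, r (a, b, c) * Real.log (∑ a', r (a', b, c)) := Finset.sum_comm
  have h3 : entn r = - ∑ a, ∑ b, ∑ c, r (a, b, c) * Real.log (r (a, b, c)) := by
    unfold entn
    rw [Fintype.sum_prod_type]
    congr 1
    refine Finset.sum_congr rfl fun a _ => ?_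
    rw [Fintype.sum_prod_type]
  have h4 : entn (fun c => ∑ a, ∑ b, r (a, b, c))
      = - ∑ a, ∑ b, ∑ c, r (a, b, c) * Real.log (∑ a', ∑ b', r (a', b', c)) := by
    unfold entn
    congr 1
    calc ∑ c, (∑ a, ∑ b, r (a, b, c)) * Real.log (∑ a, ∑ b, r (a, b, c))
        = ∑ c, ∑ a, ∑ b, r (a, b, c) * Real.log (∑ a', ∑ b', r (a', b', c)) := by
          refine Finset.sum_congr rfl fun c _ => ?_
          simp only [Finset.sum_mul]
      _ = ∑ a, ∑ c, ∑ b, r (a, b, c) * Real.log (∑ a', ∑ b', r (a', b', c)) :=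
          Finset.sum_comm
      _ = ∑ a, ∑ b, ∑ c, r (a, b, c) * Real.log (∑ a', ∑ b', r (a', b', c)) :=
          Finset.sum_congr rfl fun a _ => Finset.sum_comm
  rw [h1, h2, h3, h4]
  have hcomb :
      (- ∑ a, ∑ b, ∑ c, r (a, b, c) * Real.log (∑ b', r (a, b', c)))
      + (- ∑ a, ∑ b, ∑ c, r (a, b, c) * Real.log (∑ a', r (a', b, c)))
      - (- ∑ a, ∑ b, ∑ c, r (a, b, c) * Real.log (r (a, b, c)))
      - (- ∑ a, ∑ b, ∑ c, r (a, b, c) * Real.log (∑ a', ∑ b', r (a', b', c)))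
      = - ∑ a, ∑ b, ∑ c, r (a, b, c) * (Real.log (∑ b', r (a, b', c))
          + Real.log (∑ a', r (a', b, c)) - Real.log (r (a, b, c))
          - Real.log (∑ a', ∑ b', r (a', b', c))) := by
    simp only [mul_add, mul_sub, Finset.sum_add_distrib, Finset.sum_sub_distrib]
    ring
  rw [hcomb, neg_nonneg]
  have hbound : ∀ a b c, r (a, b, c) * (Real.log (∑ b', r (a, b', c))
      + Real.log (∑ a', r (a', b, c)) - Real.log (r (a, b, c))
      - Real.log (∑ a', ∑ b', r (a', b', c)))
      ≤ (∑ b', r (a, b', c)) * (∑ a', r (a', b, c)) / (∑ a', ∑ b', r (a', b', c))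
        - r (a, b, c) := by
    intro a b c
    have hy : r (a, b, c) ≤ ∑ b', r (a, b', c) :=
      Finset.single_le_sum (fun i _ => hr (a, i, c)) (Finset.mem_univ b)
    have hw : r (a, b, c) ≤ ∑ a', ∑ b', r (a', b', c) :=
      le_trans hy (Finset.single_le_sum
        (fun i _ => Finset.sum_nonneg fun j _ => hr (i, j, c)) (Finset.mem_univ a))
    exact key_pt _ _ _ _ (hr _) hy
      (Finset.single_le_sum (fun i _ => hr (i, b, c)) (Finset.mem_univ a)) hw
  calc ∑ a, ∑ b, ∑ c, r (a, b, c) * (Real.log (∑ b', r (a, b', c))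
          + Real.log (∑ a', r (a', b, c)) - Real.log (r (a, b, c))
          - Real.log (∑ a', ∑ b', r (a', b', c)))
      ≤ ∑ a, ∑ b, ∑ c, ((∑ b', r (a, b', c)) * (∑ a', r (a', b, c))
          / (∑ a', ∑ b', r (a', b', c)) - r (a, b, c)) :=
        Finset.sum_le_sum fun a _ => Finset.sum_le_sum fun b _ =>
          Finset.sum_le_sum fun c _ => hbound a b c
    _ = ∑ c, ∑ a, ∑ b, ((∑ b', r (a, b', c)) * (∑ a', r (a', b, c))
          / (∑ a', ∑ b', r (a', b', c)) - r (a, b, c)) :=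
        calc ∑ a, ∑ b, ∑ c, ((∑ b', r (a, b', c)) * (∑ a', r (a', b, c))
              / (∑ a', ∑ b', r (a', b', c)) - r (a, b, c))
            = ∑ a, ∑ c, ∑ b, ((∑ b', r (a, b', c)) * (∑ a', r (a', b, c))
              / (∑ a', ∑ b', r (a', b', c)) - r (a, b, c)) :=
              Finset.sum_congr rfl fun a _ => Finset.sum_comm
          _ = ∑ c, ∑ a, ∑ b, ((∑ b', r (a, b', c)) * (∑ a', r (a', b, c))
              / (∑ a', ∑ b', r (a', b', c)) - r (a, b, c)) := Finset.sum_comm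
    _ ≤ 0 := by
        refine Finset.sum_nonpos fun c _ => ?_
        have hsplit : ∑ a, ∑ b, ((∑ b', r (a, b', c)) * (∑ a', r (a', b, c))
            / (∑ a', ∑ b', r (a', b', c)) - r (a, b, c))
            = (∑ a, ∑ b, r (a, b, c)) * (∑ a, ∑ b, r (a, b, c))
              / (∑ a', ∑ b', r (a', b', c)) - ∑ a, ∑ b, r (a, b, c) := by
          simp only [Finset.sum_sub_distrib, ← Finset.sum_div]
          congr 1
          congr 1
          calc ∑ a, ∑ b, (∑ b', r (a, b', c)) * (∑ a', r (a', b, c))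
              = ∑ a, (∑ b', r (a, b', c)) * ∑ b, (∑ a', r (a', b, c)) := by
                refine Finset.sum_congr rfl fun a _ => ?_
                rw [Finset.mul_sum]
            _ = (∑ a, ∑ b', r (a, b', c)) * ∑ b, ∑ a', r (a', b, c) := by
                rw [Finset.sum_mul]
            _ = (∑ a, ∑ b, r (a, b, c)) * (∑ a, ∑ b, r (a, b, c)) := by
                rw [Finset.sum_comm]
        rw [hsplit]
        rcases eq_or_ne (∑ a, ∑ b, r (a, b, c)) 0 with h | h
        · simp [h]
        · rw [mul_div_assoc, div_self h, mul_one, sub_self]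

lemma chain {C V : Type*} [Fintype C] [Fintype V] (s : C → ℝ) (m' : C → V → ℝ)
    (hm1 : ∀ c, ∑ v, m' c v = 1) :
    entn (fun t : V × C => s t.2 * m' t.2 t.1) = entn s + ∑ c, s c * entn (m' c) := by
  have key : ∀ c, ∑ v, (s c * m' c v) * Real.log (s c * m' c v)
      = s c * Real.log (s c) - s c * entn (m' c) := by
    intro c
    have hpt : ∀ v, (s c * m' c v) * Real.log (s c * m' c v)
        = m' c v * (s c * Real.log (s c)) + s c * (m' c v * Real.log (m' c v)) := by
      intro v
      rcases eq_or_ne (s c) 0 with h | h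
      · simp [h]
      rcases eq_or_ne (m' c v) 0 with h2 | h2
      · simp [h2]
      rw [Real.log_mul h h2]; ring
    rw [Finset.sum_congr rfl fun v _ => hpt v, Finset.sum_add_distrib,
      ← Finset.sum_mul, hm1, ← Finset.mul_sum]
    unfold entn; ring
  calc entn (fun t : V × C => s t.2 * m' t.2 t.1)
      = - ∑ v, ∑ c, (s c * m' c v) * Real.log (s c * m' c v) := by
        unfold entn; rw [Fintype.sum_prod_type]
    _ = - ∑ c, ∑ v, (s c * m' c v) * Real.log (s c * m' c v) := by rw [Finset.sum_comm]
    _ = - ∑ c, (s c * Real.log (s c) - s c * entn (m' c)) := by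
        rw [Finset.sum_congr rfl fun c _ => key c]
    _ = entn s + ∑ c, s c * entn (m' c) := by
        unfold entn; rw [Finset.sum_sub_distrib]; ring

/-- If the joint distribution factors as `p(u,x) p(y1,y2|x) p(û|y2)` and
`H(Û|Y1) = H(Û|Y2)`, then `I(U; Û | Y1) = 0`. -/
theorem stmt5 {U X Y1 Y2 V : Type*}
    [Fintype U] [Fintype X] [Fintype Y1] [Fintype Y2] [Fintype V]
    (p : U × X × Y1 × Y2 × V → ℝ)
    (q1 : U × X → ℝ) (k : X → Y1 × Y2 → ℝ) (m : Y2 → V → ℝ)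
    (hq1 : ∀ z, 0 ≤ q1 z) (hq11 : ∑ z, q1 z = 1)
    (hk : ∀ x y, 0 ≤ k x y) (hk1 : ∀ x, ∑ y, k x y = 1)
    (hm : ∀ y v, 0 ≤ m y v) (hm1 : ∀ y, ∑ v, m y v = 1)
    (hfac : ∀ u x y1 y2 v,
      p (u, x, y1, y2, v) = q1 (u, x) * k x (y1, y2) * m y2 v)
    (hent : -- H(Û|Y1) = H(Û|Y2)
      (ent (fun t : V × Y1 => ∑ u, ∑ x, ∑ y2, p (u, x, t.2, y2, t.1))
        - ent (fun y1 => ∑ u, ∑ x, ∑ y2, ∑ v, p (u, x, y1, y2, v)))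
      =
      (ent (fun t : V × Y2 => ∑ u, ∑ x, ∑ y1, p (u, x, y1, t.2, t.1))
        - ent (fun y2 => ∑ u, ∑ x, ∑ y1, ∑ v, p (u, x, y1, y2, v)))) :
    -- I(U; Û | Y1) = H(U,Y1) + H(Û,Y1) - H(U,Û,Y1) - H(Y1) = 0
    (ent (fun t : U × Y1 => ∑ x, ∑ y2, ∑ v, p (t.1, x, t.2, y2, v))
      + ent (fun t : V × Y1 => ∑ u, ∑ x, ∑ y2, p (u, x, t.2, y2, t.1))
      - ent (fun t : U × V × Y1 => ∑ x, ∑ y2, p (t.1, x, t.2.2, y2, t.2.1))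
      - ent (fun y1 => ∑ u, ∑ x, ∑ y2, ∑ v, p (u, x, y1, y2, v))) = 0 := by
  have hlog2 : Real.log 2 ≠ 0 := ne_of_gt (Real.log_pos (by norm_num))
  have hp : ∀ z, 0 ≤ p z := by
    rintro ⟨u, x, y1, y2, v⟩
    rw [hfac]
    exact mul_nonneg (mul_nonneg (hq1 _) (hk _ _)) (hm _ _)
  have hvs : ∀ u x y1 y2, ∑ v', p (u, x, y1, y2, v') = q1 (u, x) * k x (y1, y2) := by
    intro u x y1 y2
    simp only [hfac]
    rw [← Finset.mul_sum, hm1, mul_one]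
  have hw : ∀ u y1 y2, ∑ v, ∑ x, p (u, x, y1, y2, v)
      = ∑ x, q1 (u, x) * k x (y1, y2) := by
    intro u y1 y2
    rw [Finset.sum_comm]
    exact Finset.sum_congr rfl fun x _ => hvs u x y1 y2
  have hg1 : ∀ v y2, (∑ u, ∑ x, ∑ y1, p (u, x, y1, y2, v))
      = (∑ u, ∑ x, ∑ y1, ∑ v', p (u, x, y1, y2, v')) * m y2 v := by
    intro v y2
    calc ∑ u, ∑ x, ∑ y1, p (u, x, y1, y2, v)
        = ∑ u, ∑ x, ∑ y1, (q1 (u, x) * k x (y1, y2)) * m y2 v := by simp only [hfac]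
      _ = (∑ u, ∑ x, ∑ y1, q1 (u, x) * k x (y1, y2)) * m y2 v := by
          simp only [← Finset.sum_mul]
      _ = (∑ u, ∑ x, ∑ y1, ∑ v', p (u, x, y1, y2, v')) * m y2 v := by
          simp only [hvs]
  -- step 1: nonnegativity of I(U;Û|Y1)
  have F1 : 0 ≤ entn (fun t : U × Y1 => ∑ v, ∑ x, ∑ y2, p (t.1, x, t.2, y2, v))
      + entn (fun t : V × Y1 => ∑ u, ∑ x, ∑ y2, p (u, x, t.2, y2, t.1))
      - entn (fun t : U × V × Y1 => ∑ x, ∑ y2, p (t.1, x, t.2.2, y2, t.2.1))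
      - entn (fun y1 => ∑ u, ∑ v, ∑ x, ∑ y2, p (u, x, y1, y2, v)) :=
    cmi_nonneg (A := U) (B := V) (C := Y1)
      (fun t : U × V × Y1 => ∑ x, ∑ y2, p (t.1, x, t.2.2, y2, t.2.1))
      (fun t => Finset.sum_nonneg fun x _ => Finset.sum_nonneg fun y2 _ => hp _)
  have ef1 : entn (fun t : U × Y1 => ∑ v, ∑ x, ∑ y2, p (t.1, x, t.2, y2, v))
      = entn (fun t : U × Y1 => ∑ x, ∑ y2, ∑ v, p (t.1, x, t.2, y2, v)) :=
    congrArg entn (funext fun t => rot3 _)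
  have ef4 : entn (fun y1 => ∑ u, ∑ v, ∑ x, ∑ y2, p (u, x, y1, y2, v))
      = entn (fun y1 => ∑ u, ∑ x, ∑ y2, ∑ v, p (u, x, y1, y2, v)) :=
    congrArg entn (funext fun y1 => Finset.sum_congr rfl fun u _ => rot3 _)
  rw [ef1, ef4] at F1
  -- step 2: I(Û;Y2|U,Y1) ≥ 0
  have F2 : 0 ≤ entn (fun t : V × (U × Y1)
        => ∑ y2, ∑ x, p (t.2.1, x, t.2.2, y2, t.1))
      + entn (fun c : Y2 × U × Y1 => ∑ v, ∑ x, p (c.2.1, x, c.2.2, c.1, v))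
      - entn (fun t : V × Y2 × U × Y1 => ∑ x, p (t.2.2.1, x, t.2.2.2, t.2.1, t.1))
      - entn (fun c : U × Y1 => ∑ v, ∑ y2, ∑ x, p (c.1, x, c.2, y2, v)) :=
    cmi_nonneg (A := V) (B := Y2) (C := U × Y1)
      (fun t : V × Y2 × U × Y1 => ∑ x, p (t.2.2.1, x, t.2.2.2, t.2.1, t.1))
      (fun t => Finset.sum_nonneg fun x _ => hp _)
  have eM1 : entn (fun t : V × (U × Y1) => ∑ y2, ∑ x, p (t.2.1, x, t.2.2, y2, t.1))
      = entn (fun t : U × V × Y1 => ∑ x, ∑ y2, p (t.1, x, t.2.2, y2, t.2.1)) :=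
    entn_congr ⟨fun t => (t.2.1, t.1, t.2.2), fun s => (s.2.1, (s.1, s.2.2)),
      fun _ => rfl, fun _ => rfl⟩ _ _ (fun _ => Finset.sum_comm)
  have eM4 : entn (fun c : U × Y1 => ∑ v, ∑ y2, ∑ x, p (c.1, x, c.2, y2, v))
      = entn (fun t : U × Y1 => ∑ x, ∑ y2, ∑ v, p (t.1, x, t.2, y2, v)) :=
    congrArg entn (funext fun c => (rot3 _).trans Finset.sum_comm)
  rw [eM1, eM4] at F2
  -- identify the joint with the chain-rule form
  have er2 : entn (fun t : V × Y2 × U × Y1 => ∑ x, p (t.2.2.1, x, t.2.2.2, t.2.1, t.1))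
      = entn (fun t : V × (Y2 × U × Y1) =>
          (fun c : Y2 × U × Y1 => ∑ v, ∑ x, p (c.2.1, x, c.2.2, c.1, v)) t.2
            * m t.2.1 t.1) := by
    refine congrArg entn (funext fun t => ?_)
    obtain ⟨v, y2, u, y1⟩ := t
    show (∑ x, p (u, x, y1, y2, v)) = (∑ v', ∑ x, p (u, x, y1, y2, v')) * m y2 v
    rw [hw u y1 y2, Finset.sum_mul]
    exact Finset.sum_congr rfl fun x _ => hfac u x y1 y2 v
  have chainB : entn (fun t : V × (Y2 × U × Y1) =>
        (fun c : Y2 × U × Y1 => ∑ v, ∑ x, p (c.2.1, x, c.2.2, c.1, v)) t.2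
          * m t.2.1 t.1)
      = entn (fun c : Y2 × U × Y1 => ∑ v, ∑ x, p (c.2.1, x, c.2.2, c.1, v))
        + ∑ c : Y2 × U × Y1, (∑ v, ∑ x, p (c.2.1, x, c.2.2, c.1, v)) * entn (m c.1) :=
    chain (fun c : Y2 × U × Y1 => ∑ v, ∑ x, p (c.2.1, x, c.2.2, c.1, v))
      (fun c => m c.1) (fun c => hm1 c.1)
  rw [er2, chainB] at F2
  -- identify the sums S2 = S1
  have hS : ∑ c : Y2 × U × Y1, (∑ v, ∑ x, p (c.2.1, x, c.2.2, c.1, v)) * entn (m c.1)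
      = ∑ y2, (∑ u, ∑ x, ∑ y1, ∑ v, p (u, x, y1, y2, v)) * entn (m y2) := by
    rw [Fintype.sum_prod_type]
    refine Finset.sum_congr rfl fun y2 _ => ?_
    show ∑ s : U × Y1, (∑ v, ∑ x, p (s.1, x, s.2, y2, v)) * entn (m y2) = _
    rw [← Finset.sum_mul]
    congr 1
    rw [Fintype.sum_prod_type]
    exact Finset.sum_congr rfl fun u _ => (rot3 _).symm
  rw [hS] at F2
  -- chain rule for H(Û,Y2)
  have eg1 : entn (fun t : V × Y2 => ∑ u, ∑ x, ∑ y1, p (u, x, y1, t.2, t.1))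
      = entn (fun t : V × Y2 =>
          (fun y2 => ∑ u, ∑ x, ∑ y1, ∑ v, p (u, x, y1, y2, v)) t.2 * m t.2 t.1) :=
    congrArg entn (funext fun t => hg1 t.1 t.2)
  have chainA : entn (fun t : V × Y2 =>
        (fun y2 => ∑ u, ∑ x, ∑ y1, ∑ v, p (u, x, y1, y2, v)) t.2 * m t.2 t.1)
      = entn (fun y2 => ∑ u, ∑ x, ∑ y1, ∑ v, p (u, x, y1, y2, v))
        + ∑ y2, (∑ u, ∑ x, ∑ y1, ∑ v, p (u, x, y1, y2, v)) * entn (m y2) :=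
    chain (fun y2 => ∑ u, ∑ x, ∑ y1, ∑ v, p (u, x, y1, y2, v)) m hm1
  -- convert the hypothesis and the goal to entn
  simp only [ent_eq] at hent ⊢
  rw [div_sub_div_same, div_sub_div_same] at hent
  have hentn := congrArg (· * Real.log 2) hent
  simp only [div_mul_cancel₀ _ hlog2] at hentn
  rw [eg1, chainA] at hentn
  rw [← add_div, div_sub_div_same, div_sub_div_same, div_eq_zero_iff]
  left
  linarith [F1, F2, hentn]
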